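/- arXiv:1102.1115 — 4 statements merged into one kernel-verified Lean document; each statement's English description precedes it below -/
import Mathlib

section
/- Every finite two-player zero-sum matrix game admits a mixed-strategy saddle-point equilibrium. Precisely: for any n, m ≥ 1 and any payoff matrix A ∈ ℝ^{n×m}, there exist mixed strategies x* ∈ Δ_n and y* ∈ Δ_m such that for all x ∈ Δ_n and all y ∈ Δ_m, x*ᵀ A y ≤ x*ᵀ A y* ≤ xᵀ A y*. -/
open Finset

/-- Expected payoff `xᵀ A y` of a zero-sum matrix game under mixed strategies `x, y`. -/
noncomputable def payoff {n m : ℕ} (A : Fin n → Fin m → ℝ)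
    (x : Fin n → ℝ) (y : Fin m → ℝ) : ℝ :=
  ∑ i, ∑ j, x i * A i j * y j

private noncomputable def gMax {n m : ℕ} (A : Fin (n+1) → Fin (m+1) → ℝ)
    (x : Fin (n+1) → ℝ) : ℝ :=
  univ.sup' univ_nonempty (fun j => ∑ i, x i * A i j)

private noncomputable def fMin {n m : ℕ} (A : Fin (n+1) → Fin (m+1) → ℝ)
    (y : Fin (m+1) → ℝ) : ℝ :=
  univ.inf' univ_nonempty (fun i => ∑ j, A i j * y j)

private lemma payoff_le_gMax {n m : ℕ} (A : Fin (n+1) → Fin (m+1) → ℝ)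
    (x : Fin (n+1) → ℝ) {y : Fin (m+1) → ℝ} (hy : y ∈ stdSimplex ℝ (Fin (m+1))) :
    payoff A x y ≤ gMax A x := by
  have h : payoff A x y = ∑ j, (∑ i, x i * A i j) * y j := by
    rw [payoff, Finset.sum_comm]
    simp [Finset.sum_mul]
  rw [h]
  calc ∑ j, (∑ i, x i * A i j) * y j ≤ ∑ j, gMax A x * y j := by
        apply Finset.sum_le_sum
        intro j _
        have hle : ∑ i, x i * A i j ≤ gMax A x := by
          rw [gMax]; exact Finset.le_sup' (fun j => ∑ i, x i * A i j) (mem_univ j)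
        exact mul_le_mul_of_nonneg_right hle (hy.1 j)
    _ = gMax A x := by rw [← Finset.mul_sum, hy.2, mul_one]

private lemma fMin_le_payoff {n m : ℕ} (A : Fin (n+1) → Fin (m+1) → ℝ)
    {x : Fin (n+1) → ℝ} (hx : x ∈ stdSimplex ℝ (Fin (n+1))) (y : Fin (m+1) → ℝ) :
    fMin A y ≤ payoff A x y := by
  have h : payoff A x y = ∑ i, x i * (∑ j, A i j * y j) := by
    rw [payoff]
    simp [Finset.mul_sum, mul_assoc]
  rw [h]
  calc fMin A y = ∑ i, x i * fMin A y := by rw [← Finset.sum_mul, hx.2, one_mul]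
    _ ≤ ∑ i, x i * (∑ j, A i j * y j) := by
        apply Finset.sum_le_sum
        intro i _
        have hle : fMin A y ≤ ∑ j, A i j * y j := by
          rw [fMin]; exact Finset.inf'_le (fun i => ∑ j, A i j * y j) (mem_univ i)
        exact mul_le_mul_of_nonneg_left hle (hx.1 i)

/-- Every finite two-player zero-sum matrix game (with at least one row and one
column) admits a mixed-strategy saddle-point equilibrium. -/
theorem matrix_game_exists_MSSPE (n m : ℕ) (A : Fin (n + 1) → Fin (m + 1) → ℝ) :
    ∃ xs ∈ stdSimplex ℝ (Fin (n + 1)), ∃ ys ∈ stdSimplex ℝ (Fin (m + 1)),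
      (∀ y ∈ stdSimplex ℝ (Fin (m + 1)), payoff A xs y ≤ payoff A xs ys) ∧
      (∀ x ∈ stdSimplex ℝ (Fin (n + 1)), payoff A xs ys ≤ payoff A x ys) := by
  classical
  -- minimizer of gMax over the simplex
  have hgc : Continuous (gMax A) := by
    apply Continuous.finset_sup'_apply
    intro j _
    exact continuous_finset_sum _ fun i _ => (continuous_apply i).mul continuous_const
  have hfc : Continuous (fMin A) := by
    apply Continuous.finset_inf'_apply
    intro i _
    exact continuous_finset_sum _ fun j _ => continuous_const.mul (continuous_apply j)
  obtain ⟨xs, hxs, hxs_min⟩ := (isCompact_stdSimplex ℝ (Fin (n+1))).exists_isMinOn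
    ⟨_, ite_eq_mem_stdSimplex ℝ 0⟩ hgc.continuousOn
  obtain ⟨ys, hys, hys_max⟩ := (isCompact_stdSimplex ℝ (Fin (m+1))).exists_isMaxOn
    ⟨_, ite_eq_mem_stdSimplex ℝ 0⟩ hfc.continuousOn
  -- key claim: gMax A xs ≤ fMin A ys
  have key : gMax A xs ≤ fMin A ys := by
    by_contra hlt
    push_neg at hlt
    set c : ℝ := (fMin A ys + gMax A xs) / 2 with hc
    have hc1 : fMin A ys < c := by simp only [hc]; linarith
    have hc2 : c < gMax A xs := by simp only [hc]; linarith
    -- sets to separate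
    set T : (Fin (m+1) → ℝ) → (Fin (n+1) → ℝ) := fun y i => ∑ j, A i j * y j with hT
    set K : Set (Fin (n+1) → ℝ) := T '' stdSimplex ℝ (Fin (m+1)) with hK
    set S : Set (Fin (n+1) → ℝ) := {z | ∀ i, c ≤ z i} with hS
    have hTlin : IsLinearMap ℝ T := by
      constructor
      · intro a b; funext i; simp [hT, mul_add, Finset.sum_add_distrib]
      · intro r a; funext i
        simp [hT, Finset.mul_sum]
        congr 1; funext j; ring
    have hTcont : Continuous T := by
      apply continuous_pi
      intro i
      exact continuous_finset_sum _ fun j _ => continuous_const.mul (continuous_apply j)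
    have hKcvx : Convex ℝ K := (convex_stdSimplex ℝ _).is_linear_image hTlin
    have hKcomp : IsCompact K := (isCompact_stdSimplex ℝ _).image hTcont
    have hScvx : Convex ℝ S := by
      intro a ha b hb s t hs ht hst
      intro i
      have := ha i; have := hb i
      calc c = s * c + t * c := by rw [← add_mul, hst, one_mul]
        _ ≤ s * a i + t * b i := by
            exact add_le_add (mul_le_mul_of_nonneg_left (ha i) hs)
              (mul_le_mul_of_nonneg_left (hb i) ht)
        _ = (s • a + t • b) i := by simp [mul_comm]
    have hScl : IsClosed S := by
      have : S = ⋂ i, {z : Fin (n+1) → ℝ | c ≤ z i} := by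
        ext z; simp [hS]
      rw [this]
      exact isClosed_iInter fun i => isClosed_le continuous_const (continuous_apply i)
    have hdisj : Disjoint K S := by
      rw [Set.disjoint_left]
      rintro z ⟨y, hy, rfl⟩ hzS
      have h1 : fMin A y ≤ fMin A ys := hys_max hy
      obtain ⟨i, -, hi⟩ := Finset.exists_mem_eq_inf' (univ_nonempty)
        (fun i => ∑ j, A i j * y j)
      have h2 : fMin A y = ∑ j, A i j * y j := hi
      have h3 : c ≤ T y i := hzS i
      simp only [hT] at h3
      linarith
    obtain ⟨φ, u, w, hφK, huw, hφS⟩ :=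
      geometric_hahn_banach_compact_closed hKcvx hKcomp hScvx hScl hdisj
    set p : Fin (n+1) → ℝ := fun i => φ (Pi.single i 1) with hp
    have hsingle : ∀ i : Fin (n+1), (fun j => if i = j then (1:ℝ) else 0) = Pi.single i 1 := by
      intro i; funext j; simp [Pi.single_apply, eq_comm]
    have hφ_eq : ∀ z : Fin (n+1) → ℝ, φ z = ∑ i, z i * p i := by
      intro z
      conv_lhs => rw [pi_eq_sum_univ z]
      rw [map_sum]
      refine Finset.sum_congr rfl fun i _ => ?_
      rw [hsingle i, map_smul, smul_eq_mul, hp]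
    -- p is nonnegative
    have hpnn : ∀ i, 0 ≤ p i := by
      intro i
      by_contra hneg
      push_neg at hneg
      set t : ℝ := (φ (fun _ => c) - w) / (-(p i)) + 1 with ht
      have hpi : 0 < -(p i) := by linarith
      have htpos : 0 ≤ t := by
        have h1 : w < φ (fun _ => c) := hφS _ (fun i => le_refl c)
        have h2 := div_nonneg (by linarith : (0:ℝ) ≤ φ (fun _ => c) - w) hpi.le
        simp only [ht]; linarith
      have hmem : (fun k => c + t * (Pi.single i 1 : Fin (n+1) → ℝ) k) ∈ S := by
        intro k
        rcases eq_or_ne k i with rfl | hk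
        · simp; positivity
        · simp [Pi.single_eq_of_ne hk]
      have h1 := hφS _ hmem
      have h2 : φ (fun k => c + t * (Pi.single i 1 : Fin (n+1) → ℝ) k)
          = φ (fun _ => c) + t * p i := by
        have : (fun k => c + t * (Pi.single i 1 : Fin (n+1) → ℝ) k)
            = (fun _ => c) + t • (Pi.single i 1 : Fin (n+1) → ℝ) := by
          funext k; simp [smul_eq_mul]
        rw [this, map_add, map_smul, smul_eq_mul, hp]
      rw [h2] at h1
      have h3 : t * p i = -(φ (fun _ => c) - w) + p i := by
        rw [ht, add_mul, div_mul_eq_mul_div]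
        rw [mul_div_assoc, div_neg, div_self hneg.ne, mul_neg, mul_one, one_mul]
      rw [h3] at h1
      linarith
    -- sum of p is positive
    have hTys : T ys ∈ K := ⟨ys, hys, rfl⟩
    have hφc : w < φ (fun _ => c) := hφS _ (fun _ => le_refl c)
    have hφTy : φ (T ys) < u := hφK _ hTys
    have hpsum : 0 < ∑ i, p i := by
      rcases lt_or_eq_of_le (Finset.sum_nonneg fun i (_ : i ∈ univ) => hpnn i) with h | h
      · exact h
      · exfalso
        have hz : ∀ i, p i = 0 := fun i =>
          (Finset.sum_eq_zero_iff_of_nonneg (fun i _ => hpnn i)).mp h.symm i (mem_univ i)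
        have h1 : φ (fun _ => c) = 0 := by rw [hφ_eq]; simp [hz]
        have h2 : φ (T ys) = 0 := by rw [hφ_eq]; simp [hz]
        linarith
    -- normalized x
    set x : Fin (n+1) → ℝ := fun i => p i / ∑ k, p k with hx
    have hxmem : x ∈ stdSimplex ℝ (Fin (n+1)) := by
      constructor
      · intro i; exact div_nonneg (hpnn i) hpsum.le
      · rw [hx]; simp only [← Finset.sum_div]; field_simp
    -- for every column j, the x-payoff is < c
    have hcol : ∀ j, ∑ i, x i * A i j < c := by
      intro j
      have hej : (Pi.single j 1 : Fin (m+1) → ℝ) ∈ stdSimplex ℝ (Fin (m+1)) :=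
        single_mem_stdSimplex ℝ j
      have hTej : T (Pi.single j 1) ∈ K := ⟨_, hej, rfl⟩
      have h1 : φ (T (Pi.single j 1)) < u := hφK _ hTej
      have h2 : φ (T (Pi.single j 1)) = ∑ i, A i j * p i := by
        rw [hφ_eq]
        refine Finset.sum_congr rfl fun i _ => ?_
        congr 1
        simp [hT, Pi.single_apply, mul_ite]
      have h3 : ∑ i, x i * A i j = (∑ i, A i j * p i) / ∑ k, p k := by
        rw [hx, Finset.sum_div]
        congr 1; funext i; ring
      rw [h3, ← h2]
      rw [div_lt_iff₀ hpsum]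
      have h4 : u < c * ∑ k, p k := by
        have : φ (fun _ => c) = c * ∑ k, p k := by
          rw [hφ_eq, Finset.mul_sum]
        linarith
      linarith
    have : gMax A x < c := by
      rw [gMax]
      rw [Finset.sup'_lt_iff]
      intro j _
      exact hcol j
    have := hxs_min hxmem
    simp only [IsMinOn, IsMinFilter] at this
    have : gMax A xs ≤ gMax A x := hxs_min hxmem
    linarith
  -- assemble saddle point
  refine ⟨xs, hxs, ys, hys, ?_, ?_⟩
  · intro y hy
    have h1 : payoff A xs y ≤ gMax A xs := payoff_le_gMax A xs hy
    have h2 : fMin A ys ≤ payoff A xs ys := fMin_le_payoff A hxs ys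
    linarith
  · intro x hx
    have h1 : payoff A xs ys ≤ gMax A xs := payoff_le_gMax A xs hys
    have h2 : fMin A ys ≤ payoff A x ys := fMin_le_payoff A hx ys
    linarith
end

section
/- For every β > 0, the function f(x) = Q(√(β x)) is strictly convex on the interval (0, ∞), where Q is the Gaussian Q-function. -/
open MeasureTheory Real Set

/-- The Gaussian Q-function: the tail probability of the standard normal distribution. -/
noncomputable def gaussQ (t : ℝ) : ℝ :=
  ∫ u in Set.Ioi t, (1 / Real.sqrt (2 * Real.pi)) * Real.exp (-u ^ 2 / 2)

noncomputable def gaussPdf (u : ℝ) : ℝ := (1 / Real.sqrt (2 * Real.pi)) * Real.exp (-u ^ 2 / 2)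

lemma gaussPdf_cont : Continuous gaussPdf := by
  unfold gaussPdf; continuity

lemma gaussPdf_pos (u : ℝ) : 0 < gaussPdf u := by
  have h2π : 0 < Real.sqrt (2 * Real.pi) := Real.sqrt_pos.2 (by positivity)
  exact mul_pos (by positivity) (Real.exp_pos _)

lemma gaussPdf_integrable : Integrable gaussPdf := by
  have h : Integrable (fun u : ℝ => Real.exp (-(1/2 : ℝ) * u ^ 2)) :=
    integrable_exp_neg_mul_sq (by norm_num)
  refine (h.const_mul (1 / Real.sqrt (2 * Real.pi))).congr ?_
  filter_upwards with u
  unfold gaussPdf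
  ring_nf

lemma hasDerivAt_gaussQ (t : ℝ) : HasDerivAt gaussQ (-gaussPdf t) t := by
  have key : ∀ s : ℝ, gaussQ s = (∫ u, gaussPdf u) - (∫ u in Iic 0, gaussPdf u)
      - ∫ u in (0:ℝ)..s, gaussPdf u := by
    intro s
    have h1 : (∫ u in Iic s, gaussPdf u) + (∫ u in Ioi s, gaussPdf u) = ∫ u, gaussPdf u :=
      intervalIntegral.integral_Iic_add_Ioi gaussPdf_integrable.integrableOn gaussPdf_integrable.integrableOn
    have h2 : (∫ u in Iic s, gaussPdf u) - (∫ u in Iic 0, gaussPdf u)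
        = ∫ u in (0:ℝ)..s, gaussPdf u :=
      intervalIntegral.integral_Iic_sub_Iic gaussPdf_integrable.integrableOn gaussPdf_integrable.integrableOn
    have h3 : gaussQ s = ∫ u in Ioi s, gaussPdf u := rfl
    rw [h3]; linarith
  have hd : HasDerivAt (fun s => ∫ u in (0:ℝ)..s, gaussPdf u) (gaussPdf t) t := by
    refine intervalIntegral.integral_hasDerivAt_right
      gaussPdf_integrable.intervalIntegrable ?_ gaussPdf_cont.continuousAt
    exact gaussPdf_cont.stronglyMeasurableAtFilter _ _
  have h := hd.const_sub ((∫ u, gaussPdf u) - (∫ u in Iic 0, gaussPdf u))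
  exact h.congr_of_eventuallyEq (by filter_upwards with s using key s)

/-- For every `β > 0`, the function `x ↦ Q(√(β x))` is strictly convex on `(0, ∞)`. -/
theorem strictConvexOn_gaussQ_sqrt (β : ℝ) (hβ : 0 < β) :
    StrictConvexOn ℝ (Set.Ioi (0 : ℝ)) (fun x => gaussQ (Real.sqrt (β * x))) := by
  set f : ℝ → ℝ := fun x => gaussQ (Real.sqrt (β * x)) with hf
  set g : ℝ → ℝ := fun x =>
    -(gaussPdf (Real.sqrt (β * x)) * (1 / (2 * Real.sqrt (β * x)) * β)) with hg
  have hQcont : Continuous gaussQ :=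
    continuous_iff_continuousAt.2 fun t => (hasDerivAt_gaussQ t).continuousAt
  have hcont : ContinuousOn f (Ioi 0) :=
    (hQcont.comp (Real.continuous_sqrt.comp (continuous_const.mul continuous_id))).continuousOn
  have hderiv : ∀ x ∈ Ioi (0:ℝ), HasDerivAt f (g x) x := by
    intro x hx
    have hbx : 0 < β * x := mul_pos hβ hx
    have hlin : HasDerivAt (fun x : ℝ => β * x) β x := by
      simpa using (hasDerivAt_id x).const_mul β
    have hsq : HasDerivAt (fun x => Real.sqrt (β * x)) (1 / (2 * Real.sqrt (β * x)) * β) x :=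
      (Real.hasDerivAt_sqrt hbx.ne').comp x hlin
    simpa [hg, hf, Function.comp_def, mul_comm] using (hasDerivAt_gaussQ (Real.sqrt (β * x))).comp x hsq
  have hgmono : StrictMonoOn g (Ioi 0) := by
    intro x hx y hy hxy
    have hbx : 0 < β * x := mul_pos hβ hx
    have hby : 0 < β * y := mul_pos hβ hy
    have hsx : 0 < Real.sqrt (β * x) := Real.sqrt_pos.2 hbx
    have hsy : 0 < Real.sqrt (β * y) := Real.sqrt_pos.2 hby
    have hslt : Real.sqrt (β * x) < Real.sqrt (β * y) :=
      Real.sqrt_lt_sqrt hbx.le (by nlinarith)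
    have hp : gaussPdf (Real.sqrt (β * y)) < gaussPdf (Real.sqrt (β * x)) := by
      unfold gaussPdf
      have h2π : 0 < Real.sqrt (2 * Real.pi) := Real.sqrt_pos.2 (by positivity)
      have : Real.exp (-(Real.sqrt (β * y)) ^ 2 / 2) < Real.exp (-(Real.sqrt (β * x)) ^ 2 / 2) := by
        apply Real.exp_lt_exp.2
        nlinarith
      exact mul_lt_mul_of_pos_left this (by positivity)
    have hq : 1 / (2 * Real.sqrt (β * y)) * β < 1 / (2 * Real.sqrt (β * x)) * β := by
      apply mul_lt_mul_of_pos_right _ hβ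
      apply div_lt_div_of_pos_left one_pos (by positivity)
      linarith
    have hA : gaussPdf (Real.sqrt (β * y)) * (1 / (2 * Real.sqrt (β * y)) * β)
        < gaussPdf (Real.sqrt (β * x)) * (1 / (2 * Real.sqrt (β * x)) * β) :=
      mul_lt_mul'' hp hq (gaussPdf_pos _).le (by positivity)
    simp only [hg]
    linarith
  refine StrictMonoOn.strictConvexOn_of_deriv (convex_Ioi 0) hcont ?_
  rw [interior_Ioi]
  exact hgmono.congr fun x hx => ((hderiv x hx).deriv).symm
end

section
/- Let β, b, c > 0 and define h(γ) = Q(√(β·b/(c+γ))) for γ ≥ 0, where Q is the Gaussian Q-function. Then for every γ ≥ 0, the second derivative of h at γ is negative if and only if β·b/(c+γ) < 3, and positive if and only if β·b/(c+γ) > 3. -/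
open MeasureTheory Real

noncomputable def phiG (t : ℝ) : ℝ := (1 / Real.sqrt (2 * Real.pi)) * Real.exp (-t ^ 2 / 2)

lemma phiG_pos (t : ℝ) : 0 < phiG t := by
  apply mul_pos
  · positivity
  · exact Real.exp_pos _

lemma phiG_cont : Continuous phiG := by
  apply Continuous.mul continuous_const
  exact Real.continuous_exp.comp (by continuity)

lemma phiG_integrable : Integrable phiG := by
  have h : Integrable (fun t : ℝ => Real.exp (-(1/2 : ℝ) * t ^ 2)) :=
    integrable_exp_neg_mul_sq (by norm_num)
  have h2 : Integrable (fun t : ℝ => (1 / Real.sqrt (2 * Real.pi)) * Real.exp (-(1/2 : ℝ) * t ^ 2)) :=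
    h.const_mul _
  refine h2.congr (Filter.Eventually.of_forall fun t => ?_)
  unfold phiG
  ring_nf

lemma phiG_hasDerivAt (t : ℝ) : HasDerivAt phiG (-t * phiG t) t := by
  have h1 : HasDerivAt (fun t : ℝ => -t ^ 2 / 2) (-t) t := by
    have := ((hasDerivAt_pow 2 t).neg).div_const 2
    refine this.congr_deriv ?_; symm
    push_cast
    ring
  have := (h1.exp).const_mul (1 / Real.sqrt (2 * Real.pi))
  have e : -t * phiG t = 1 / Real.sqrt (2 * Real.pi) * (Real.exp (-t ^ 2 / 2) * -t) := by
    unfold phiG; ring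
  rw [e]
  exact this

lemma gaussQ_eq (t : ℝ) : gaussQ t = gaussQ 0 - ∫ u in (0:ℝ)..t, phiG u := by
  have hi := phiG_integrable
  have h1 : ∀ s : ℝ, gaussQ s = (∫ u, phiG u) - ∫ u in Set.Iic s, phiG u := by
    intro s
    have := intervalIntegral.integral_Iic_add_Ioi (b := s) hi.integrableOn hi.integrableOn
    unfold gaussQ
    rw [← this]
    simp [phiG]
  rw [h1 t, h1 0]
  rw [← intervalIntegral.integral_Iic_sub_Iic hi.integrableOn hi.integrableOn]
  ring

lemma gaussQ_hasDerivAt (t : ℝ) : HasDerivAt gaussQ (-phiG t) t := by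
  have hd : HasDerivAt (fun s => ∫ u in (0:ℝ)..s, phiG u) (phiG t) t := by
    refine intervalIntegral.integral_hasDerivAt_right
      (phiG_cont.intervalIntegrable _ _)
      phiG_cont.aestronglyMeasurable.stronglyMeasurableAtFilter
      phiG_cont.continuousAt
  have : HasDerivAt (fun s => gaussQ 0 - ∫ u in (0:ℝ)..s, phiG u) (-phiG t) t :=
    (hd.const_sub _)
  exact this.congr_of_eventuallyEq (Filter.Eventually.of_forall fun s => (gaussQ_eq s))

lemma inner_hasDerivAt (β b c γ : ℝ) (hx : c + γ ≠ 0) :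
    HasDerivAt (fun γ => β * (b / (c + γ))) (-(β * b) / (c + γ) ^ 2) γ := by
  have h1 : HasDerivAt (fun γ : ℝ => c + γ) 1 γ := by
    simpa using (hasDerivAt_id γ).const_add c
  have := ((hasDerivAt_const γ b).div h1 hx).const_mul β
  refine this.congr_deriv ?_; symm
  field_simp
  ring

lemma sqrt_arg_hasDerivAt (β b c γ : ℝ) (hβ : 0 < β) (hb : 0 < b) (hx : 0 < c + γ) :
    HasDerivAt (fun γ => Real.sqrt (β * (b / (c + γ))))
      (1 / (2 * Real.sqrt (β * (b / (c + γ)))) * (-(β * b) / (c + γ) ^ 2)) γ := by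
  have harg : 0 < β * (b / (c + γ)) := by positivity
  exact (Real.hasDerivAt_sqrt harg.ne').comp γ (inner_hasDerivAt β b c γ hx.ne')

lemma first_deriv (β b c γ : ℝ) (hβ : 0 < β) (hb : 0 < b) (hx : 0 < c + γ) :
    HasDerivAt (fun γ => gaussQ (Real.sqrt (β * (b / (c + γ)))))
      (phiG (Real.sqrt (β * (b / (c + γ)))) *
        (Real.sqrt (β * b) * Real.sqrt (c + γ) / (2 * (c + γ) ^ 2))) γ := by
  have hK : 0 < β * b := mul_pos hβ hb
  have h4 := (gaussQ_hasDerivAt _).comp γ (sqrt_arg_hasDerivAt β b c γ hβ hb hx)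
  refine h4.congr_deriv ?_; symm
  rw [show β * (b / (c + γ)) = (β * b) / (c + γ) from by ring, Real.sqrt_div hK.le]
  have hsx : (0:ℝ) < Real.sqrt (c + γ) := Real.sqrt_pos.2 hx
  have hsK : (0:ℝ) < Real.sqrt (β * b) := Real.sqrt_pos.2 hK
  set sK := Real.sqrt (β * b) with hsKdef
  set sx := Real.sqrt (c + γ) with hsxdef
  have e1 : sK ^ 2 = β * b := Real.sq_sqrt hK.le
  have e2 : sx ^ 2 = c + γ := Real.sq_sqrt hx.le
  rw [← e1, ← e2]
  field_simp

lemma g_hasDerivAt (β b c γ : ℝ) (hβ : 0 < β) (hb : 0 < b) (hx : 0 < c + γ) :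
    HasDerivAt (fun γ => phiG (Real.sqrt (β * (b / (c + γ)))) *
        (Real.sqrt (β * b) * Real.sqrt (c + γ) / (2 * (c + γ) ^ 2)))
      (phiG (Real.sqrt (β * (b / (c + γ)))) * Real.sqrt (β * b) * Real.sqrt (c + γ) *
        (β * b - 3 * (c + γ)) / (4 * (c + γ) ^ 4)) γ := by
  have hK : 0 < β * b := mul_pos hβ hb
  have h1 : HasDerivAt (fun γ : ℝ => c + γ) 1 γ := by
    simpa using (hasDerivAt_id γ).const_add c
  have hphi := (phiG_hasDerivAt _).comp γ (sqrt_arg_hasDerivAt β b c γ hβ hb hx)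
  have hsx' : HasDerivAt (fun γ => Real.sqrt (c + γ)) (1 / (2 * Real.sqrt (c + γ)) * 1) γ :=
    (Real.hasDerivAt_sqrt hx.ne').comp γ h1
  have hden : HasDerivAt (fun γ => 2 * (c + γ) ^ 2) (2 * (2 * (c + γ) ^ 1 * 1)) γ :=
    ((h1.pow 2).const_mul 2)
  have hnum := hsx'.const_mul (Real.sqrt (β * b))
  have hr := hnum.div hden (by positivity)
  have htotal := hphi.mul hr
  refine htotal.congr_deriv ?_; symm
  simp only [Function.comp_apply, Function.comp, Pi.div_apply]
  rw [show β * (b / (c + γ)) = (β * b) / (c + γ) from by ring, Real.sqrt_div hK.le]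
  have hsx : (0:ℝ) < Real.sqrt (c + γ) := Real.sqrt_pos.2 hx
  have hsK : (0:ℝ) < Real.sqrt (β * b) := Real.sqrt_pos.2 hK
  have hp : (0:ℝ) < phiG (Real.sqrt (β * b) / Real.sqrt (c + γ)) := phiG_pos _
  set p := phiG (Real.sqrt (β * b) / Real.sqrt (c + γ)) with hpdef
  set sK := Real.sqrt (β * b) with hsKdef
  set sx := Real.sqrt (c + γ) with hsxdef
  have e1 : sK ^ 2 = β * b := Real.sq_sqrt hK.le
  have e2 : sx ^ 2 = c + γ := Real.sq_sqrt hx.le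
  clear_value p sK sx
  rw [← e1, ← e2]
  field_simp
  ring

lemma second_deriv_eq (β b c : ℝ) (hβ : 0 < β) (hb : 0 < b) (γ : ℝ) (hx : 0 < c + γ)
    (hcγ : -c < γ) :
    deriv (deriv fun γ => gaussQ (Real.sqrt (β * (b / (c + γ))))) γ =
      phiG (Real.sqrt (β * (b / (c + γ)))) * Real.sqrt (β * b) * Real.sqrt (c + γ) *
        (β * b - 3 * (c + γ)) / (4 * (c + γ) ^ 4) := by
  have hev : deriv (fun γ => gaussQ (Real.sqrt (β * (b / (c + γ))))) =ᶠ[nhds γ]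
      (fun γ => phiG (Real.sqrt (β * (b / (c + γ)))) *
        (Real.sqrt (β * b) * Real.sqrt (c + γ) / (2 * (c + γ) ^ 2))) := by
    filter_upwards [Ioi_mem_nhds hcγ] with y hy
    have : 0 < c + y := by
      have := Set.mem_Ioi.mp hy; linarith
    exact (first_deriv β b c y hβ hb this).deriv
  rw [hev.deriv_eq]
  exact (g_hasDerivAt β b c γ hβ hb hx).deriv

/-- For `β, b, c > 0` and `h(γ) = Q(√(β·b/(c+γ)))`, the second derivative of `h`
at any `γ ≥ 0` is negative iff `β·b/(c+γ) < 3`, and positive iff `β·b/(c+γ) > 3`. -/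
theorem gaussQ_jamming_second_deriv_sign (β b c : ℝ) (hβ : 0 < β) (hb : 0 < b)
    (hc : 0 < c) (γ : ℝ) (hγ : 0 ≤ γ) :
    (deriv (deriv fun γ => gaussQ (Real.sqrt (β * (b / (c + γ))))) γ < 0 ↔
      β * (b / (c + γ)) < 3) ∧
    (0 < deriv (deriv fun γ => gaussQ (Real.sqrt (β * (b / (c + γ))))) γ ↔
      3 < β * (b / (c + γ))) := by
  have hx : 0 < c + γ := by linarith
  rw [second_deriv_eq β b c hβ hb γ hx (by linarith)]
  have hP : 0 < phiG (Real.sqrt (β * (b / (c + γ)))) * Real.sqrt (β * b) * Real.sqrt (c + γ) /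
      (4 * (c + γ) ^ 4) := by
    have := phiG_pos (Real.sqrt (β * (b / (c + γ))))
    have h1 : (0:ℝ) < Real.sqrt (β * b) := Real.sqrt_pos.2 (by positivity)
    have h2 : (0:ℝ) < Real.sqrt (c + γ) := Real.sqrt_pos.2 hx
    positivity
  have key : β * (b / (c + γ)) = (β * b) / (c + γ) := by ring
  set P := phiG (Real.sqrt (β * (b / (c + γ)))) * Real.sqrt (β * b) * Real.sqrt (c + γ) /
      (4 * (c + γ) ^ 4) with hPdef
  have hexpr : phiG (Real.sqrt (β * (b / (c + γ)))) * Real.sqrt (β * b) * Real.sqrt (c + γ) *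
        (β * b - 3 * (c + γ)) / (4 * (c + γ) ^ 4) = P * (β * b - 3 * (c + γ)) := by
    rw [hPdef]; ring
  rw [hexpr, key, div_lt_iff₀ hx, lt_div_iff₀ hx]
  constructor
  · constructor
    · intro h
      by_contra hcon
      push_neg at hcon
      nlinarith [mul_nonneg hP.le (show (0:ℝ) ≤ β * b - 3 * (c + γ) by linarith)]
    · intro h
      exact mul_neg_of_pos_of_neg hP (by linarith)
  · constructor
    · intro h
      by_contra hcon
      push_neg at hcon
      nlinarith [mul_nonpos_of_nonneg_of_nonpos hP.le (show β * b - 3 * (c + γ) ≤ 0 by linarith)]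
    · intro h
      exact mul_pos hP (by linarith)
end

section
/- Let β, b, c > 0 satisfy β·b/c < 3. Then the function h(γ) = Q(√(β·b/(c+γ))) is strictly concave on [0, ∞), where Q is the Gaussian Q-function. -/
open Real Set MeasureTheory Filter

lemma phi_integrable :
    Integrable (fun u : ℝ => (1 / Real.sqrt (2 * Real.pi)) * Real.exp (-u ^ 2 / 2)) := by
  have h : Integrable (fun u : ℝ => Real.exp (-(1/2 : ℝ) * u ^ 2)) :=
    integrable_exp_neg_mul_sq (by norm_num)
  have h2 := h.const_mul (1 / Real.sqrt (2 * Real.pi))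
  refine h2.congr ?_
  filter_upwards with u
  ring_nf

lemma phi_continuous :
    Continuous (fun u : ℝ => (1 / Real.sqrt (2 * Real.pi)) * Real.exp (-u ^ 2 / 2)) := by
  fun_prop

lemma integral_Ioi_split {f : ℝ → ℝ} (hf : Integrable f) (a s : ℝ) :
    ∫ u in Ioi s, f u = (∫ u in Ioi a, f u) - ∫ u in a..s, f u := by
  rcases le_total a s with hle | hle
  · rw [intervalIntegral.integral_of_le hle]
    have hs : Ioi a = Ioc a s ∪ Ioi s := (Ioc_union_Ioi_eq_Ioi hle).symm
    rw [hs, setIntegral_union (Ioc_disjoint_Ioi le_rfl) measurableSet_Ioi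
      hf.integrableOn hf.integrableOn]
    ring
  · rw [intervalIntegral.integral_of_ge hle]
    have hs : Ioi s = Ioc s a ∪ Ioi a := (Ioc_union_Ioi_eq_Ioi hle).symm
    rw [hs, setIntegral_union (Ioc_disjoint_Ioi le_rfl) measurableSet_Ioi
      hf.integrableOn hf.integrableOn]
    ring

lemma hasDerivAt_gaussQ_s10 (t : ℝ) :
    HasDerivAt gaussQ (-((1 / Real.sqrt (2 * Real.pi)) * Real.exp (-t ^ 2 / 2))) t := by
  have key : gaussQ = fun s =>
      (∫ u in Ioi (0:ℝ), (1 / Real.sqrt (2 * Real.pi)) * Real.exp (-u ^ 2 / 2)) -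
        ∫ u in (0:ℝ)..s, (1 / Real.sqrt (2 * Real.pi)) * Real.exp (-u ^ 2 / 2) := by
    funext s
    exact integral_Ioi_split phi_integrable 0 s
  rw [key]
  have hd : HasDerivAt
      (fun s => ∫ u in (0:ℝ)..s, (1 / Real.sqrt (2 * Real.pi)) * Real.exp (-u ^ 2 / 2))
      ((1 / Real.sqrt (2 * Real.pi)) * Real.exp (-t ^ 2 / 2)) t :=
    intervalIntegral.integral_hasDerivAt_right
      (phi_integrable.intervalIntegrable (a := 0) (b := t))
      (phi_continuous.stronglyMeasurableAtFilter _ _)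
      phi_continuous.continuousAt
  exact hd.const_sub _

/-- First derivative of `γ ↦ Q(√(a/(c+γ)))`. -/
noncomputable def gqF1 (a c : ℝ) : ℝ → ℝ := fun x =>
  1 / Real.sqrt (2 * Real.pi) * (Real.sqrt a / 2) *
    (Real.exp (-(a / (c + x)) / 2) * (c + x) ^ (-(3/2) : ℝ))

/-- Second derivative of `γ ↦ Q(√(a/(c+γ)))`. -/
noncomputable def gqF2 (a c : ℝ) : ℝ → ℝ := fun x =>
  1 / Real.sqrt (2 * Real.pi) * (Real.sqrt a / 2) * Real.exp (-(a / (c + x)) / 2) *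
    ((c + x) ^ (-(5/2) : ℝ) * (a / (2 * (c + x)) - 3/2))

lemma mem_nhds_pos_add {c x : ℝ} (hx : 0 < c + x) : {γ : ℝ | 0 < c + γ} ∈ nhds x := by
  have hopen : IsOpen {γ : ℝ | 0 < c + γ} :=
    isOpen_lt continuous_const (continuous_const.add continuous_id)
  exact hopen.mem_nhds hx

lemma hasDerivAt_gq (a c : ℝ) (ha : 0 < a) {x : ℝ} (hx : 0 < c + x) :
    HasDerivAt (fun γ => gaussQ (Real.sqrt (a / (c + γ)))) (gqF1 a c x) x := by
  have hden : HasDerivAt (fun γ : ℝ => c + γ) 1 x := (hasDerivAt_id x).const_add c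
  -- derivative of the rpow form of the inner function
  have hG : HasDerivAt (fun γ : ℝ => Real.sqrt a * (c + γ) ^ (-(1/2) : ℝ))
      (Real.sqrt a * (-(1/2) * (c + x) ^ (-(3/2) : ℝ))) x := by
    have h2 := (Real.hasDerivAt_rpow_const (x := c + x) (p := -(1/2)) (Or.inl hx.ne')).comp x hden
    have h3 := h2.const_mul (Real.sqrt a)
    refine h3.congr_deriv ?_
    norm_num
  -- the two forms agree near x
  have hEq : (fun γ : ℝ => Real.sqrt (a / (c + γ)))
      =ᶠ[nhds x] fun γ => Real.sqrt a * (c + γ) ^ (-(1/2) : ℝ) := by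
    filter_upwards [mem_nhds_pos_add hx] with γ hγ
    rw [div_eq_mul_inv, Real.sqrt_mul ha.le, Real.sqrt_inv, Real.sqrt_eq_rpow (c + γ),
      ← Real.rpow_neg hγ.le]
  have hcomp := (hasDerivAt_gaussQ_s10 (Real.sqrt a * (c + x) ^ (-(1/2) : ℝ))).comp x hG
  have hsq : (Real.sqrt a * (c + x) ^ (-(1/2) : ℝ)) ^ 2 = a / (c + x) := by
    rw [mul_pow, Real.sq_sqrt ha.le, ← Real.rpow_natCast ((c + x) ^ (-(1/2) : ℝ)) 2,
      ← Real.rpow_mul hx.le]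
    norm_num [Real.rpow_neg_one, div_eq_mul_inv]
  have hmain := hcomp.congr_of_eventuallyEq (hEq.fun_comp gaussQ)
  refine hmain.congr_deriv ?_
  rw [gqF1]
  simp only [hsq]
  ring

lemma hasDerivAt_gqF1 (a c : ℝ) (ha : 0 < a) {x : ℝ} (hx : 0 < c + x) :
    HasDerivAt (gqF1 a c) (gqF2 a c x) x := by
  have hden : HasDerivAt (fun γ : ℝ => c + γ) 1 x := (hasDerivAt_id x).const_add c
  have hq : HasDerivAt (fun γ : ℝ => a / (c + γ)) (-(a / (c + x) ^ 2)) x := by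
    have h0 := (hasDerivAt_const x a).div hden hx.ne'
    refine h0.congr_deriv ?_
    ring
  have hv : HasDerivAt (fun γ : ℝ => -(a / (c + γ)) / 2) (a / (c + x) ^ 2 / 2) x := by
    have h0 := hq.neg.div_const 2
    refine h0.congr_deriv ?_
    ring
  have hexp := hv.exp
  have hpow : HasDerivAt (fun γ : ℝ => (c + γ) ^ (-(3/2) : ℝ))
      (-(3/2) * (c + x) ^ (-(5/2) : ℝ)) x := by
    have h2 := (Real.hasDerivAt_rpow_const (x := c + x) (p := -(3/2)) (Or.inl hx.ne')).comp x hden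
    refine h2.congr_deriv ?_
    norm_num
  have hprod := (hexp.mul hpow).const_mul (1 / Real.sqrt (2 * Real.pi) * (Real.sqrt a / 2))
  have hF : gqF1 a c = fun γ => 1 / Real.sqrt (2 * Real.pi) * (Real.sqrt a / 2) *
      (Real.exp (-(a / (c + γ)) / 2) * (c + γ) ^ (-(3/2) : ℝ)) := rfl
  rw [hF]
  refine hprod.congr_deriv ?_
  have hsplit : (c + x) ^ (-(3/2) : ℝ) = (c + x) ^ (-(5/2) : ℝ) * (c + x) := by
    have h := Real.rpow_add hx (-(5/2)) 1
    norm_num at h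
    rw [← h]
  rw [gqF2]
  simp only [hsplit]
  generalize hY : c + x = y
  have hy : y ≠ 0 := hY ▸ hx.ne'
  field_simp
  ring

lemma gqF2_neg (a c : ℝ) (ha : 0 < a) (hc : 0 < c) (h3 : a / c < 3) {x : ℝ} (hx : 0 ≤ x) :
    gqF2 a c x < 0 := by
  have hcx : 0 < c + x := by linarith
  have hle : a / (c + x) ≤ a / c :=
    div_le_div_of_nonneg_left ha.le hc (by linarith)
  have hbr : a / (2 * (c + x)) - 3/2 < 0 := by
    have : a / (c + x) < 3 := lt_of_le_of_lt hle h3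
    rw [div_lt_iff₀ hcx] at this
    rw [sub_neg, div_lt_iff₀ (by linarith : (0:ℝ) < 2 * (c + x))]
    linarith
  have hpos1 : 0 < 1 / Real.sqrt (2 * Real.pi) * (Real.sqrt a / 2) *
      Real.exp (-(a / (c + x)) / 2) := by positivity
  have hP : 0 < (c + x) ^ (-(5/2) : ℝ) := Real.rpow_pos_of_pos hcx _
  exact mul_neg_of_pos_of_neg hpos1 (mul_neg_of_pos_of_neg hP hbr)

lemma strictConcaveOn_gq (a c : ℝ) (ha : 0 < a) (hc : 0 < c) (h3 : a / c < 3) :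
    StrictConcaveOn ℝ (Set.Ici (0 : ℝ)) (fun γ => gaussQ (Real.sqrt (a / (c + γ)))) := by
  apply strictConcaveOn_of_deriv2_neg (convex_Ici 0)
  · intro x hx
    have hcx : 0 < c + x := by simp only [mem_Ici] at hx; linarith
    exact (hasDerivAt_gq a c ha hcx).continuousAt.continuousWithinAt
  · intro x hx
    rw [interior_Ici, mem_Ioi] at hx
    have hcx : 0 < c + x := by linarith
    have hEqd : deriv (fun γ => gaussQ (Real.sqrt (a / (c + γ)))) =ᶠ[nhds x] gqF1 a c := by
      filter_upwards [mem_nhds_pos_add hcx] with y hy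
      exact (hasDerivAt_gq a c ha hy).deriv
    have h2 : deriv^[2] (fun γ => gaussQ (Real.sqrt (a / (c + γ)))) x = gqF2 a c x := by
      simp only [Function.iterate_succ, Function.iterate_zero, Function.comp_apply, id_eq]
      rw [hEqd.deriv_eq]
      exact (hasDerivAt_gqF1 a c ha hcx).deriv
    rw [h2]
    exact gqF2_neg a c ha hc h3 hx.le

/-- If `β, b, c > 0` and `β·b/c < 3`, then `γ ↦ Q(√(β·b/(c+γ)))` is strictly concave
on `[0, ∞)`. -/
theorem strictConcaveOn_gaussQ_jamming (β b c : ℝ) (hβ : 0 < β) (hb : 0 < b)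
    (hc : 0 < c) (h : β * (b / c) < 3) :
    StrictConcaveOn ℝ (Set.Ici (0 : ℝ))
      (fun γ => gaussQ (Real.sqrt (β * (b / (c + γ))))) := by
  have hr : (fun γ : ℝ => gaussQ (Real.sqrt (β * (b / (c + γ)))))
      = fun γ => gaussQ (Real.sqrt ((β * b) / (c + γ))) := by
    funext γ
    rw [mul_div_assoc']
  rw [hr]
  exact strictConcaveOn_gq (β * b) c (mul_pos hβ hb) hc (by rwa [mul_div_assoc'] at h)
end
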